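/- The Macaulay growth function is monotone: if m ≤ n are positive integers and d ≥ 1, then ((m)_{(d)})^{+1}_{+1} ≤ ((n)_{(d)})^{+1}_{+1}. -/
import Mathlib


/-- The list of pairs `(nᵢ, i)` appearing in the `d`-binomial (Macaulay) expansion
of `n`, computed greedily. -/
def binomialExpansion : ℕ → ℕ → List (ℕ × ℕ)
  | _, 0 => []
  | 0, _ + 1 => []
  | n + 1, d + 1 =>
      let a := Nat.findGreatest (fun m => Nat.choose m (d + 1) ≤ n + 1) (n + d + 2)
      (a, d + 1) :: binomialExpansion (n + 1 - Nat.choose a (d + 1)) d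
  termination_by n d => d

/-- `((n)_(d))^{+1}_{+1}` : Macaulay's upper bound for growth from degree `d` to `d+1`. -/
def macaulayBound (n d : ℕ) : ℕ :=
  ((binomialExpansion n d).map fun p => Nat.choose (p.1 + 1) (p.2 + 1)).sum

/-- `((n)_(d))^{-1}_{-1}`. -/
def macaulayLower (n d : ℕ) : ℕ :=
  ((binomialExpansion n d).map fun p => Nat.choose (p.1 - 1) (p.2 - 1)).sum

/-- `((n)_(d))^{-1}_{0}` : the bound appearing in Green's theorem. -/
def greenBound (n d : ℕ) : ℕ :=
  ((binomialExpansion n d).map fun p => Nat.choose (p.1 - 1) p.2).sum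

/-- A finite sequence of nonnegative integers, recorded as a list, is an O-sequence if it
starts with `1` and satisfies Macaulay's growth bound in every degree. -/
def IsOSequence (h : List ℕ) : Prop :=
  h.getD 0 0 = 1 ∧
    ∀ d : ℕ, 1 ≤ d → d + 1 < h.length → h.getD (d + 1) 0 ≤ macaulayBound (h.getD d 0) d

/-- A list is unimodal if it is nondecreasing up to some index and nonincreasing afterwards,
i.e. it never strictly increases after a strict decrease. -/
def IsUnimodal (l : List ℕ) : Prop :=
  ∃ m : ℕ,
    (∀ i j : ℕ, i ≤ j → j ≤ m → j < l.length → l.getD i 0 ≤ l.getD j 0) ∧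
    (∀ i j : ℕ, m ≤ i → i ≤ j → j < l.length → l.getD j 0 ≤ l.getD i 0)

/-- A list is symmetric if it equals its reverse. -/
def IsSymmetricSeq (l : List ℕ) : Prop :=
  ∀ i : ℕ, i < l.length → l.getD i 0 = l.getD (l.length - 1 - i) 0

lemma choose_lower {e m : ℕ} (h : e + 1 ≤ m) : m + 1 ≤ Nat.choose m (e + 1) + (e + 1) := by
  induction m, h using Nat.le_induction with
  | base => rw [Nat.choose_self]; omega
  | succ m hm ih =>
    have h1 : 0 < Nat.choose m e := Nat.choose_pos (by omega)
    have h2 : Nat.choose (m + 1) (e + 1) = Nat.choose m e + Nat.choose m (e + 1) :=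
      Nat.choose_succ_succ m e
    omega

lemma binomialExpansion_succ (n d : ℕ) :
    binomialExpansion (n + 1) (d + 1) =
      (Nat.findGreatest (fun m => Nat.choose m (d + 1) ≤ n + 1) (n + d + 2), d + 1) ::
        binomialExpansion
          (n + 1 - Nat.choose
            (Nat.findGreatest (fun m => Nat.choose m (d + 1) ≤ n + 1) (n + d + 2)) (d + 1)) d := by
  rw [binomialExpansion]

lemma macaulayBound_zero_left (d : ℕ) : macaulayBound 0 d = 0 := by
  cases d <;> simp [macaulayBound, binomialExpansion]

lemma macaulayBound_zero_right (n : ℕ) : macaulayBound n 0 = 0 := by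
  cases n <;> simp [macaulayBound, binomialExpansion]

lemma macaulayBound_succ (n d : ℕ) :
    macaulayBound (n + 1) (d + 1) =
      Nat.choose (Nat.findGreatest (fun m => Nat.choose m (d + 1) ≤ n + 1) (n + d + 2) + 1) (d + 2)
      + macaulayBound
          (n + 1 - Nat.choose
            (Nat.findGreatest (fun m => Nat.choose m (d + 1) ≤ n + 1) (n + d + 2)) (d + 1)) d := by
  simp [macaulayBound, binomialExpansion_succ]

lemma fg_spec (n d : ℕ) :
    d + 1 ≤ Nat.findGreatest (fun m => Nat.choose m (d + 1) ≤ n + 1) (n + d + 2) ∧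
    Nat.choose (Nat.findGreatest (fun m => Nat.choose m (d + 1) ≤ n + 1) (n + d + 2)) (d + 1) ≤ n + 1 ∧
    n + 1 < Nat.choose
      (Nat.findGreatest (fun m => Nat.choose m (d + 1) ≤ n + 1) (n + d + 2) + 1) (d + 1) := by
  have hw : (fun m => Nat.choose m (d + 1) ≤ n + 1) (d + 1) := by
    simp only [Nat.choose_self]; omega
  have h1 : d + 1 ≤ Nat.findGreatest (fun m => Nat.choose m (d + 1) ≤ n + 1) (n + d + 2) :=
    Nat.le_findGreatest (by omega) hw
  have h2 : Nat.choose
      (Nat.findGreatest (fun m => Nat.choose m (d + 1) ≤ n + 1) (n + d + 2)) (d + 1) ≤ n + 1 :=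
    Nat.findGreatest_spec (P := fun m => Nat.choose m (d + 1) ≤ n + 1) (m := d + 1) (by omega) hw
  refine ⟨h1, h2, ?_⟩
  by_contra hc
  push_neg at hc
  have hlow := choose_lower (e := d)
    (m := Nat.findGreatest (fun m => Nat.choose m (d + 1) ≤ n + 1) (n + d + 2)) h1
  have hb : Nat.findGreatest (fun m => Nat.choose m (d + 1) ≤ n + 1) (n + d + 2) + 1 ≤ n + d + 2 := by
    omega
  have h4 : Nat.findGreatest (fun m => Nat.choose m (d + 1) ≤ n + 1) (n + d + 2) + 1 ≤
      Nat.findGreatest (fun m => Nat.choose m (d + 1) ≤ n + 1) (n + d + 2) :=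
    Nat.le_findGreatest (P := fun m => Nat.choose m (d + 1) ≤ n + 1) hb hc
  omega

lemma fg_eq (n d a : ℕ) (h1 : d + 1 ≤ a) (h2 : Nat.choose a (d + 1) ≤ n + 1)
    (h3 : n + 1 < Nat.choose (a + 1) (d + 1)) :
    Nat.findGreatest (fun m => Nat.choose m (d + 1) ≤ n + 1) (n + d + 2) = a := by
  have hlow := choose_lower (e := d) (m := a) h1
  have hb : a ≤ n + d + 2 := by omega
  have hga : a ≤ Nat.findGreatest (fun m => Nat.choose m (d + 1) ≤ n + 1) (n + d + 2) :=
    Nat.le_findGreatest (P := fun m => Nat.choose m (d + 1) ≤ n + 1) hb h2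
  have hPg : Nat.choose
      (Nat.findGreatest (fun m => Nat.choose m (d + 1) ≤ n + 1) (n + d + 2)) (d + 1) ≤ n + 1 :=
    Nat.findGreatest_spec (P := fun m => Nat.choose m (d + 1) ≤ n + 1) hb h2
  rcases Nat.lt_or_ge a (Nat.findGreatest (fun m => Nat.choose m (d + 1) ≤ n + 1) (n + d + 2))
    with h | h
  · have hmono : Nat.choose (a + 1) (d + 1) ≤ Nat.choose
        (Nat.findGreatest (fun m => Nat.choose m (d + 1) ≤ n + 1) (n + d + 2)) (d + 1) :=
      Nat.choose_le_choose _ h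
    omega
  · omega

lemma claimB : ∀ N d b : ℕ, N < Nat.choose b (d + 1) →
    macaulayBound N (d + 1) < Nat.choose (b + 1) (d + 2) := by
  intro N
  induction N using Nat.strong_induction_on with
  | _ N IH =>
    intro d b hNb
    match N with
    | 0 =>
      rw [macaulayBound_zero_left]
      have hdb : d + 1 ≤ b := by
        by_contra h
        rw [Nat.choose_eq_zero_of_lt (by omega)] at hNb
        omega
      exact Nat.choose_pos (by omega)
    | (m + 1) =>
      obtain ⟨h1, h2, h3⟩ := fg_spec m d
      rw [macaulayBound_succ m d]
      set a := Nat.findGreatest (fun k => Nat.choose k (d + 1) ≤ m + 1) (m + d + 2) with ha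
      set r := m + 1 - Nat.choose a (d + 1) with hr
      have hab : a < b := by
        by_contra h
        have := Nat.choose_le_choose (d + 1) (show b ≤ a by omega)
        omega
      have hpasc : Nat.choose (a + 1) (d + 1) = Nat.choose a d + Nat.choose a (d + 1) :=
        Nat.choose_succ_succ a d
      have hrlt : r < Nat.choose a d := by omega
      have hchoosepos : 0 < Nat.choose a (d + 1) := Nat.choose_pos h1
      have hsub : macaulayBound r d < Nat.choose (a + 1) (d + 1) := by
        cases d with
        | zero =>
          rw [macaulayBound_zero_right]
          exact Nat.choose_pos (by omega)
        | succ e => exact IH r (by omega) e a hrlt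
      have hpasc2 : Nat.choose (a + 1 + 1) (d + 2)
          = Nat.choose (a + 1) (d + 1) + Nat.choose (a + 1) (d + 2) :=
        Nat.choose_succ_succ (a + 1) (d + 1)
      have hmono : Nat.choose (a + 1 + 1) (d + 2) ≤ Nat.choose (b + 1) (d + 2) :=
        Nat.choose_le_choose _ (by omega)
      omega

lemma claimA : ∀ N d : ℕ, macaulayBound N d ≤ macaulayBound (N + 1) d := by
  intro N
  induction N using Nat.strong_induction_on with
  | _ N IH =>
    intro d
    match N, d with
    | N, 0 => rw [macaulayBound_zero_right, macaulayBound_zero_right]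
    | 0, (e + 1) => rw [macaulayBound_zero_left]; exact Nat.zero_le _
    | (m + 1), (e + 1) =>
      obtain ⟨h1, h2, h3⟩ := fg_spec m e
      set a := Nat.findGreatest (fun k => Nat.choose k (e + 1) ≤ m + 1) (m + e + 2) with ha
      by_cases hcase : Nat.choose (a + 1) (e + 1) = m + 1 + 1
      · have hpos : 0 < Nat.choose (a + 1) e := Nat.choose_pos (by omega)
        have hpasc : Nat.choose (a + 1 + 1) (e + 1)
            = Nat.choose (a + 1) e + Nat.choose (a + 1) (e + 1) :=
          Nat.choose_succ_succ (a + 1) e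
        have hfg : Nat.findGreatest (fun k => Nat.choose k (e + 1) ≤ m + 1 + 1) (m + 1 + e + 2)
            = a + 1 := fg_eq (m + 1) e (a + 1) (by omega) (by omega) (by omega)
        have hB := claimB (m + 1) e (a + 1) (by omega)
        rw [macaulayBound_succ (m + 1) e, hfg,
          show m + 1 + 1 - Nat.choose (a + 1) (e + 1) = 0 by omega, macaulayBound_zero_left]
        omega
      · have hchoosepos : 0 < Nat.choose a (e + 1) := Nat.choose_pos h1
        have hfg : Nat.findGreatest (fun k => Nat.choose k (e + 1) ≤ m + 1 + 1) (m + 1 + e + 2)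
            = a := fg_eq (m + 1) e a h1 (by omega) (by omega)
        have hIH := IH (m + 1 - Nat.choose a (e + 1)) (by omega) e
        rw [macaulayBound_succ m e, macaulayBound_succ (m + 1) e, hfg, ← ha,
          show m + 1 + 1 - Nat.choose a (e + 1) = (m + 1 - Nat.choose a (e + 1)) + 1 by omega]
        omega

/-- The Macaulay growth function is monotone: if `m ≤ n` are positive integers and `d ≥ 1`,
then `((m)_{(d)})^{+1}_{+1} ≤ ((n)_{(d)})^{+1}_{+1}`. -/
theorem macaulayBound_monotone (m n d : ℕ) (hm : 0 < m) (hmn : m ≤ n) (hd : 1 ≤ d) :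
    macaulayBound m d ≤ macaulayBound n d := by
  induction n, hmn using Nat.le_induction with
  | base => exact le_refl _
  | succ n hn ih => exact le_trans ih (claimA n d)
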